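/- (γ-mode, two dimensions) Let k ∈ ℕ and let ψ_1, ψ_2 : ℝ → ℝ each be integrable on [−1,1], vanish outside [−1,1], and have vanishing moments up to order k. Let u : [−1,1]² → ℝ be given on each of the four quadrants by a bivariate polynomial of degree at most k in each variable: u(x,y) = Σ_{p,q=0}^{k} c^{σ τ}_{p,q} x^p y^q for x in the half-interval of sign σ (σ = − for x ∈ [−1,0), σ = + for x ∈ [0,1]) and y in the half-interval of sign τ (defined analogously). Then ∫_{−1}^{1} ∫_{−1}^{1} u(x,y) ψ_1(x) ψ_2(y) dx dy = Σ_{p,q=0}^{k} ( ∫_{0}^{1} x^p ψ_1(x) dx )( ∫_{0}^{1} y^q ψ_2(y) dy ) · ( c^{++}_{p,q} − c^{+−}_{p,q} − c^{−+}_{p,q} + c^{−−}_{p,q} ); the coefficient combination equals 1/(p! q!) times the mixed jump of ∂_x^p ∂_y^q u at the origin, i.e. the alternating sum of its four one-sided limits. -/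

import Mathlib

open MeasureTheory Finset

private lemma key_onedim (k : ℕ) (ψ : ℝ → ℝ)
    (hint : IntegrableOn ψ (Set.Icc (-1) 1))
    (hmom : ∀ m ≤ k, ∫ t in (-1 : ℝ)..1, t ^ m * ψ t = 0)
    (f : ℝ → ℝ) (cm cp : ℕ → ℝ)
    (hm : ∀ x ∈ Set.Ico (-1 : ℝ) 0, f x = ∑ p ∈ Finset.range (k + 1), cm p * x ^ p)
    (hp : ∀ x ∈ Set.Icc (0 : ℝ) 1, f x = ∑ p ∈ Finset.range (k + 1), cp p * x ^ p) :
    ∫ x in (-1 : ℝ)..1, f x * ψ x =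
      ∑ p ∈ Finset.range (k + 1), (cp p - cm p) * ∫ x in (0 : ℝ)..1, x ^ p * ψ x := by
  have sub₁ : Set.uIcc (-1 : ℝ) 0 ⊆ Set.Icc (-1 : ℝ) 1 := by
    rw [Set.uIcc_of_le (by norm_num : (-1:ℝ) ≤ 0)]
    exact Set.Icc_subset_Icc le_rfl (by norm_num)
  have sub₂ : Set.uIcc (0 : ℝ) 1 ⊆ Set.Icc (-1 : ℝ) 1 := by
    rw [Set.uIcc_of_le (by norm_num : (0:ℝ) ≤ 1)]
    exact Set.Icc_subset_Icc (by norm_num) le_rfl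
  have hpow : ∀ (p : ℕ) (a b : ℝ), Set.uIcc a b ⊆ Set.Icc (-1 : ℝ) 1 →
      IntervalIntegrable (fun x => x ^ p * ψ x) volume a b := by
    intro p a b hab
    have h1 : IntegrableOn (fun x => x ^ p * ψ x) (Set.Icc (-1 : ℝ) 1) :=
      IntegrableOn.continuousOn_mul (continuous_pow p).continuousOn hint isCompact_Icc
    exact (h1.mono_set hab).intervalIntegrable
  have hneg : ∀ p ≤ k, ∫ x in (-1 : ℝ)..0, x ^ p * ψ x
      = -∫ x in (0 : ℝ)..1, x ^ p * ψ x := by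
    intro p hpk
    have hadd := intervalIntegral.integral_add_adjacent_intervals
      (hpow p (-1) 0 sub₁) (hpow p 0 1 sub₂)
    have h0 := hmom p hpk
    linarith
  have hpolyint : ∀ (c : ℕ → ℝ) (a b : ℝ), Set.uIcc a b ⊆ Set.Icc (-1 : ℝ) 1 →
      IntervalIntegrable (fun x => (∑ p ∈ Finset.range (k + 1), c p * x ^ p) * ψ x)
        volume a b := by
    intro c a b hab
    have hc : Continuous fun x : ℝ => ∑ p ∈ Finset.range (k + 1), c p * x ^ p :=
      continuous_finset_sum _ fun p _ => continuous_const.mul (continuous_pow p)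
    have h1 : IntegrableOn (fun x => (∑ p ∈ Finset.range (k + 1), c p * x ^ p) * ψ x)
        (Set.Icc (-1 : ℝ) 1) :=
      IntegrableOn.continuousOn_mul hc.continuousOn hint isCompact_Icc
    exact (h1.mono_set hab).intervalIntegrable
  have hpoly : ∀ (c : ℕ → ℝ) (a b : ℝ), Set.uIcc a b ⊆ Set.Icc (-1 : ℝ) 1 →
      ∫ x in a..b, (∑ p ∈ Finset.range (k + 1), c p * x ^ p) * ψ x
        = ∑ p ∈ Finset.range (k + 1), c p * ∫ x in a..b, x ^ p * ψ x := by
    intro c a b hab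
    have heq : ∀ x : ℝ, (∑ p ∈ Finset.range (k + 1), c p * x ^ p) * ψ x
        = ∑ p ∈ Finset.range (k + 1), c p * (x ^ p * ψ x) := by
      intro x; rw [Finset.sum_mul]; exact Finset.sum_congr rfl fun p _ => by ring
    simp only [heq]
    rw [intervalIntegral.integral_finset_sum fun p _ => (hpow p a b hab).const_mul _]
    exact Finset.sum_congr rfl fun p _ => intervalIntegral.integral_const_mul _ _
  have h0ae : ∀ᵐ x : ℝ, x ≠ (0 : ℝ) := by
    rw [ae_iff]
    simp only [not_not, Set.setOf_eq_eq_singleton]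
    exact Real.volume_singleton
  have hmae : ∀ᵐ x : ℝ, x ∈ Set.uIoc (-1 : ℝ) 0 →
      f x * ψ x = (∑ p ∈ Finset.range (k + 1), cm p * x ^ p) * ψ x := by
    filter_upwards [h0ae] with x hx0 hx
    have hx' : x ∈ Set.Ioc (-1 : ℝ) 0 := by
      rwa [Set.uIoc_of_le (by norm_num : (-1:ℝ) ≤ 0)] at hx
    rw [hm x ⟨le_of_lt hx'.1, lt_of_le_of_ne hx'.2 hx0⟩]
  have hpae : ∀ᵐ x : ℝ, x ∈ Set.uIoc (0 : ℝ) 1 →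
      f x * ψ x = (∑ p ∈ Finset.range (k + 1), cp p * x ^ p) * ψ x := by
    filter_upwards with x hx
    have hx' : x ∈ Set.Ioc (0 : ℝ) 1 := by
      rwa [Set.uIoc_of_le (by norm_num : (0:ℝ) ≤ 1)] at hx
    rw [hp x ⟨le_of_lt hx'.1, hx'.2⟩]
  have hintm : IntervalIntegrable (fun x => f x * ψ x) volume (-1) 0 := by
    refine (hpolyint cm (-1) 0 sub₁).congr_ae ?_
    filter_upwards [ae_restrict_mem measurableSet_uIoc, ae_restrict_of_ae hmae]
      with x hx heq
    exact (heq hx).symm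
  have hintp : IntervalIntegrable (fun x => f x * ψ x) volume 0 1 := by
    refine (hpolyint cp 0 1 sub₂).congr_ae ?_
    filter_upwards [ae_restrict_mem measurableSet_uIoc, ae_restrict_of_ae hpae]
      with x hx heq
    exact (heq hx).symm
  have hsplit : ∫ x in (-1 : ℝ)..1, f x * ψ x
      = (∫ x in (-1 : ℝ)..0, f x * ψ x) + ∫ x in (0 : ℝ)..1, f x * ψ x :=
    (intervalIntegral.integral_add_adjacent_intervals hintm hintp).symm
  have hIm : ∫ x in (-1 : ℝ)..0, f x * ψ x
      = ∑ p ∈ Finset.range (k + 1), cm p * (-∫ x in (0 : ℝ)..1, x ^ p * ψ x) := by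
    rw [intervalIntegral.integral_congr_ae hmae, hpoly cm (-1) 0 sub₁]
    exact Finset.sum_congr rfl fun p hpk =>
      by rw [hneg p (Nat.lt_succ_iff.mp (Finset.mem_range.mp hpk))]
  have hIp : ∫ x in (0 : ℝ)..1, f x * ψ x
      = ∑ p ∈ Finset.range (k + 1), cp p * ∫ x in (0 : ℝ)..1, x ^ p * ψ x := by
    rw [intervalIntegral.integral_congr_ae hpae, hpoly cp 0 1 sub₂]
  rw [hsplit, hIm, hIp, ← Finset.sum_add_distrib]
  exact Finset.sum_congr rfl fun p _ => by ring

/-- γ-mode, two dimensions: the γ-mode multiwavelet coefficient of a piecewise bivariate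
polynomial equals a weighted sum of the mixed jumps of its coefficients at the origin.
Here `cpp`, `cpm`, `cmp`, `cmm` are the coefficient arrays of the polynomial pieces on the
quadrants `(+,+)`, `(+,−)`, `(−,+)` and `(−,−)` respectively; the coefficient combination
`cpp p q − cpm p q − cmp p q + cmm p q` equals `1/(p! q!)` times the alternating sum of the
four one-sided limits of `∂ₓᵖ ∂_yᵠ u` at the origin. -/
theorem gamma_mode_multiwavelet_coefficient_jump (k : ℕ) (ψ₁ ψ₂ : ℝ → ℝ)
    (u : ℝ → ℝ → ℝ) (cpp cpm cmp cmm : ℕ → ℕ → ℝ)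
    (hψ₁int : IntegrableOn ψ₁ (Set.Icc (-1) 1))
    (hψ₁supp : ∀ x : ℝ, x ∉ Set.Icc (-1 : ℝ) 1 → ψ₁ x = 0)
    (hmom₁ : ∀ m ≤ k, ∫ t in (-1 : ℝ)..1, t ^ m * ψ₁ t = 0)
    (hψ₂int : IntegrableOn ψ₂ (Set.Icc (-1) 1))
    (hψ₂supp : ∀ y : ℝ, y ∉ Set.Icc (-1 : ℝ) 1 → ψ₂ y = 0)
    (hmom₂ : ∀ m ≤ k, ∫ t in (-1 : ℝ)..1, t ^ m * ψ₂ t = 0)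
    (hmm : ∀ x ∈ Set.Ico (-1 : ℝ) 0, ∀ y ∈ Set.Ico (-1 : ℝ) 0,
        u x y = ∑ p ∈ Finset.range (k + 1), ∑ q ∈ Finset.range (k + 1),
          cmm p q * x ^ p * y ^ q)
    (hmp : ∀ x ∈ Set.Ico (-1 : ℝ) 0, ∀ y ∈ Set.Icc (0 : ℝ) 1,
        u x y = ∑ p ∈ Finset.range (k + 1), ∑ q ∈ Finset.range (k + 1),
          cmp p q * x ^ p * y ^ q)
    (hpm : ∀ x ∈ Set.Icc (0 : ℝ) 1, ∀ y ∈ Set.Ico (-1 : ℝ) 0,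
        u x y = ∑ p ∈ Finset.range (k + 1), ∑ q ∈ Finset.range (k + 1),
          cpm p q * x ^ p * y ^ q)
    (hpp : ∀ x ∈ Set.Icc (0 : ℝ) 1, ∀ y ∈ Set.Icc (0 : ℝ) 1,
        u x y = ∑ p ∈ Finset.range (k + 1), ∑ q ∈ Finset.range (k + 1),
          cpp p q * x ^ p * y ^ q) :
    ∫ y in (-1 : ℝ)..1, ∫ x in (-1 : ℝ)..1, u x y * (ψ₁ x * ψ₂ y) =
      ∑ p ∈ Finset.range (k + 1), ∑ q ∈ Finset.range (k + 1),
        (∫ x in (0 : ℝ)..1, x ^ p * ψ₁ x) * (∫ y in (0 : ℝ)..1, y ^ q * ψ₂ y) *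
          (cpp p q - cpm p q - cmp p q + cmm p q) := by
  have rearrange : ∀ (cP cM : ℕ → ℕ → ℝ) (y : ℝ),
      ∑ p ∈ Finset.range (k + 1),
        ((∑ q ∈ Finset.range (k + 1), cP p q * y ^ q)
          - ∑ q ∈ Finset.range (k + 1), cM p q * y ^ q)
          * ∫ x in (0 : ℝ)..1, x ^ p * ψ₁ x
      = ∑ q ∈ Finset.range (k + 1),
          (∑ p ∈ Finset.range (k + 1),
            (cP p q - cM p q) * ∫ x in (0 : ℝ)..1, x ^ p * ψ₁ x) * y ^ q := by
    intro cP cM y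
    rw [show (∑ q ∈ Finset.range (k + 1),
          (∑ p ∈ Finset.range (k + 1),
            (cP p q - cM p q) * ∫ x in (0 : ℝ)..1, x ^ p * ψ₁ x) * y ^ q)
        = ∑ q ∈ Finset.range (k + 1), ∑ p ∈ Finset.range (k + 1),
            ((cP p q - cM p q) * ∫ x in (0 : ℝ)..1, x ^ p * ψ₁ x) * y ^ q from
      Finset.sum_congr rfl fun q _ => Finset.sum_mul _ _ _, Finset.sum_comm]
    refine Finset.sum_congr rfl fun p _ => ?_
    rw [← Finset.sum_sub_distrib, Finset.sum_mul]
    exact Finset.sum_congr rfl fun q _ => by ring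
  have hinner_p : ∀ y ∈ Set.Icc (0 : ℝ) 1,
      (∫ x in (-1 : ℝ)..1, u x y * ψ₁ x)
        = ∑ q ∈ Finset.range (k + 1),
            (∑ p ∈ Finset.range (k + 1),
              (cpp p q - cmp p q) * ∫ x in (0 : ℝ)..1, x ^ p * ψ₁ x) * y ^ q := by
    intro y hy
    rw [key_onedim k ψ₁ hψ₁int hmom₁ (fun x => u x y)
      (fun p => ∑ q ∈ Finset.range (k + 1), cmp p q * y ^ q)
      (fun p => ∑ q ∈ Finset.range (k + 1), cpp p q * y ^ q)
      (fun x hx => by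
        show u x y = ∑ p ∈ Finset.range (k + 1),
          (∑ q ∈ Finset.range (k + 1), cmp p q * y ^ q) * x ^ p
        rw [hmp x hx y hy]
        exact Finset.sum_congr rfl fun p _ => by
          rw [Finset.sum_mul]; exact Finset.sum_congr rfl fun q _ => by ring)
      (fun x hx => by
        show u x y = ∑ p ∈ Finset.range (k + 1),
          (∑ q ∈ Finset.range (k + 1), cpp p q * y ^ q) * x ^ p
        rw [hpp x hx y hy]
        exact Finset.sum_congr rfl fun p _ => by
          rw [Finset.sum_mul]; exact Finset.sum_congr rfl fun q _ => by ring)]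
    exact rearrange cpp cmp y
  have hinner_m : ∀ y ∈ Set.Ico (-1 : ℝ) 0,
      (∫ x in (-1 : ℝ)..1, u x y * ψ₁ x)
        = ∑ q ∈ Finset.range (k + 1),
            (∑ p ∈ Finset.range (k + 1),
              (cpm p q - cmm p q) * ∫ x in (0 : ℝ)..1, x ^ p * ψ₁ x) * y ^ q := by
    intro y hy
    rw [key_onedim k ψ₁ hψ₁int hmom₁ (fun x => u x y)
      (fun p => ∑ q ∈ Finset.range (k + 1), cmm p q * y ^ q)
      (fun p => ∑ q ∈ Finset.range (k + 1), cpm p q * y ^ q)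
      (fun x hx => by
        show u x y = ∑ p ∈ Finset.range (k + 1),
          (∑ q ∈ Finset.range (k + 1), cmm p q * y ^ q) * x ^ p
        rw [hmm x hx y hy]
        exact Finset.sum_congr rfl fun p _ => by
          rw [Finset.sum_mul]; exact Finset.sum_congr rfl fun q _ => by ring)
      (fun x hx => by
        show u x y = ∑ p ∈ Finset.range (k + 1),
          (∑ q ∈ Finset.range (k + 1), cpm p q * y ^ q) * x ^ p
        rw [hpm x hx y hy]
        exact Finset.sum_congr rfl fun p _ => by
          rw [Finset.sum_mul]; exact Finset.sum_congr rfl fun q _ => by ring)]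
    exact rearrange cpm cmm y
  have hLHS : ∀ y : ℝ, (∫ x in (-1 : ℝ)..1, u x y * (ψ₁ x * ψ₂ y))
      = (∫ x in (-1 : ℝ)..1, u x y * ψ₁ x) * ψ₂ y := by
    intro y
    rw [← intervalIntegral.integral_mul_const]
    exact intervalIntegral.integral_congr fun x _ => by ring
  simp only [hLHS]
  rw [key_onedim k ψ₂ hψ₂int hmom₂ (fun y => ∫ x in (-1 : ℝ)..1, u x y * ψ₁ x)
    (fun q => ∑ p ∈ Finset.range (k + 1),
        (cpm p q - cmm p q) * ∫ x in (0 : ℝ)..1, x ^ p * ψ₁ x)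
    (fun q => ∑ p ∈ Finset.range (k + 1),
        (cpp p q - cmp p q) * ∫ x in (0 : ℝ)..1, x ^ p * ψ₁ x)
    hinner_m hinner_p]
  rw [Finset.sum_comm]
  refine Finset.sum_congr rfl fun q _ => ?_
  rw [← Finset.sum_sub_distrib, Finset.sum_mul]
  exact Finset.sum_congr rfl fun p _ => by ring
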